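/- Let h be a strictly positive non-uniform probability mass function on a finite set Θ and h^(α)(θ) = h(θ)^α / Σ h(θ')^α. Then the map α ↦ KL(h ‖ h^(α)) is convex on [0, ∞), strictly decreasing on [0, 1), and strictly increasing on (1, ∞), where KL denotes the Kullback–Leibler divergence KL(p ‖ q) = Σ_θ p(θ) log(p(θ)/q(θ)). -/

import Mathlib

open Real BigOperators

/-- For a strictly positive non-uniform pmf `h` on a finite set,
with `h^(α)(θ) = h(θ)^α / Σ h(θ')^α`, the map `α ↦ KL(h ‖ h^(α))` is convex on
`[0, ∞)`, strictly decreasing on `[0, 1)`, and strictly increasing on `(1, ∞)`. -/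
theorem kl_to_alpha_scaled_convex_monotone
    {Θ : Type*} [Fintype Θ] [Nonempty Θ]
    (h : Θ → ℝ)
    (hpos : ∀ θ, 0 < h θ)
    (hsum : ∑ θ, h θ = 1)
    (hnonunif : ∃ θ₁ θ₂, h θ₁ ≠ h θ₂) :
    ConvexOn ℝ (Set.Ici 0)
      (fun α : ℝ => ∑ θ, h θ * Real.log (h θ / (h θ ^ α / ∑ θ', h θ' ^ α))) ∧
    StrictAntiOn
      (fun α : ℝ => ∑ θ, h θ * Real.log (h θ / (h θ ^ α / ∑ θ', h θ' ^ α)))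
      (Set.Ico 0 1) ∧
    StrictMonoOn
      (fun α : ℝ => ∑ θ, h θ * Real.log (h θ / (h θ ^ α / ∑ θ', h θ' ^ α)))
      (Set.Ioi 1) := by
  classical
  have hZpos : ∀ α : ℝ, 0 < ∑ θ' : Θ, h θ' ^ α := fun α =>
    Finset.sum_pos (fun θ _ => Real.rpow_pos_of_pos (hpos θ) α) Finset.univ_nonempty
  set C : ℝ := ∑ θ, h θ * Real.log (h θ) with hCdef
  -- Rewrite the function in affine + log-partition form
  have key : (fun α : ℝ => ∑ θ, h θ * Real.log (h θ / (h θ ^ α / ∑ θ', h θ' ^ α)))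
      = fun α : ℝ => (1 - α) * C + Real.log (∑ θ' : Θ, h θ' ^ α) := by
    funext α
    have hterm : ∀ θ : Θ, h θ * Real.log (h θ / (h θ ^ α / ∑ θ' : Θ, h θ' ^ α))
        = (1 - α) * (h θ * Real.log (h θ)) + h θ * Real.log (∑ θ' : Θ, h θ' ^ α) := by
      intro θ
      rw [Real.log_div (ne_of_gt (hpos θ))
          (ne_of_gt (div_pos (Real.rpow_pos_of_pos (hpos θ) α) (hZpos α))),
        Real.log_div (ne_of_gt (Real.rpow_pos_of_pos (hpos θ) α)) (ne_of_gt (hZpos α)),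
        Real.log_rpow (hpos θ)]
      ring
    rw [Finset.sum_congr rfl (fun θ _ => hterm θ), Finset.sum_add_distrib,
      ← Finset.mul_sum, ← Finset.sum_mul, hsum, hCdef]
    ring
  rw [key]
  set g : ℝ → ℝ := fun α : ℝ => (1 - α) * C + Real.log (∑ θ' : Θ, h θ' ^ α) with hgdef
  -- value at 1
  have hZ1 : (∑ θ' : Θ, h θ' ^ (1 : ℝ)) = 1 := by
    simpa [Real.rpow_one] using hsum
  have hg1 : g 1 = 0 := by
    show (1 - 1) * C + Real.log (∑ θ' : Θ, h θ' ^ (1:ℝ)) = 0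
    rw [hZ1, Real.log_one]; ring
  -- positivity away from 1 (Gibbs)
  have hgpos : ∀ α : ℝ, α ≠ 1 → 0 < g α := by
    intro α hα
    -- the scaled pmf
    set Zα : ℝ := ∑ θ' : Θ, h θ' ^ α with hZα
    have hZαpos : 0 < Zα := hZpos α
    set q : Θ → ℝ := fun θ => h θ ^ α / Zα with hq
    have hqpos : ∀ θ, 0 < q θ := fun θ => div_pos (Real.rpow_pos_of_pos (hpos θ) α) hZαpos
    have hqsum : ∑ θ, q θ = 1 := by
      rw [hq, ← Finset.sum_div, ← hZα, div_self (ne_of_gt hZαpos)]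
    -- g α equals the KL sum
    have hgeq : g α = ∑ θ, h θ * Real.log (h θ / q θ) := by
      simpa [hq, hZα] using (congrFun key α).symm
    -- some θ with q θ ≠ h θ
    have hwit : ∃ θ, q θ ≠ h θ := by
      by_contra hc
      push_neg at hc
      obtain ⟨θ₁, θ₂, hne⟩ := hnonunif
      have hlog : ∀ θ, (α - 1) * Real.log (h θ) = Real.log Zα := by
        intro θ
        have h1 : h θ ^ α = h θ * Zα := by
          have := hc θ
          replace this : h θ ^ α / Zα = h θ := this
          rw [div_eq_iff (ne_of_gt hZαpos)] at this
          linarith [this]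
        have := congrArg Real.log h1
        rw [Real.log_rpow (hpos θ), Real.log_mul (ne_of_gt (hpos θ)) (ne_of_gt hZαpos)] at this
        linarith
      have hα1 : α - 1 ≠ 0 := sub_ne_zero.mpr hα
      have : Real.log (h θ₁) = Real.log (h θ₂) := by
        have e1 := hlog θ₁
        have e2 := hlog θ₂
        have : (α - 1) * Real.log (h θ₁) = (α - 1) * Real.log (h θ₂) := by rw [e1, e2]
        exact mul_left_cancel₀ hα1 this
      exact hne (Real.log_injOn_pos (Set.mem_Ioi.mpr (hpos θ₁))
        (Set.mem_Ioi.mpr (hpos θ₂)) this)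
    obtain ⟨θ₀, hθ₀⟩ := hwit
    -- Gibbs: Σ (h - q) < Σ h log(h/q)
    have hle : ∀ θ : Θ, h θ - q θ ≤ h θ * Real.log (h θ / q θ) := by
      intro θ
      have hr : (0:ℝ) < q θ / h θ := div_pos (hqpos θ) (hpos θ)
      have hl := Real.log_le_sub_one_of_pos hr
      have hdiv : h θ / q θ = (q θ / h θ)⁻¹ := by
        rw [inv_div]
      rw [hdiv, Real.log_inv]
      have hqh : q θ / h θ * h θ = q θ := div_mul_cancel₀ _ (ne_of_gt (hpos θ))
      nlinarith [hpos θ]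
    have hlt : h θ₀ - q θ₀ < h θ₀ * Real.log (h θ₀ / q θ₀) := by
      have hr : (0:ℝ) < q θ₀ / h θ₀ := div_pos (hqpos θ₀) (hpos θ₀)
      have hne1 : q θ₀ / h θ₀ ≠ 1 := by
        intro hc
        exact hθ₀ ((div_eq_one_iff_eq (ne_of_gt (hpos θ₀))).mp hc)
      have hl := Real.log_lt_sub_one_of_pos hr hne1
      have hdiv : h θ₀ / q θ₀ = (q θ₀ / h θ₀)⁻¹ := by rw [inv_div]
      rw [hdiv, Real.log_inv]
      have hqh : q θ₀ / h θ₀ * h θ₀ = q θ₀ := div_mul_cancel₀ _ (ne_of_gt (hpos θ₀))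
      nlinarith [hpos θ₀]
    have hsumlt : ∑ θ, (h θ - q θ) < ∑ θ, h θ * Real.log (h θ / q θ) :=
      Finset.sum_lt_sum (fun θ _ => hle θ) ⟨θ₀, Finset.mem_univ θ₀, hlt⟩
    rw [Finset.sum_sub_distrib, hsum, hqsum] at hsumlt
    rw [hgeq]
    linarith
  -- convexity
  have hconv : ConvexOn ℝ (Set.Ici 0) g := by
    refine ⟨convex_Ici 0, ?_⟩
    intro x _ y _ a b ha hb hab
    simp only [smul_eq_mul, hgdef]
    -- Hölder: Z(ax+by) ≤ Z x ^ a * Z y ^ b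
    have hhold : (∑ θ' : Θ, h θ' ^ (a * x + b * y))
        ≤ (∑ θ' : Θ, h θ' ^ x) ^ a * (∑ θ' : Θ, h θ' ^ y) ^ b := by
      set Zx : ℝ := ∑ θ' : Θ, h θ' ^ x with hZx
      set Zy : ℝ := ∑ θ' : Θ, h θ' ^ y with hZy
      have hZxpos : 0 < Zx := hZpos x
      have hZypos : 0 < Zy := hZpos y
      have hterm : ∀ θ : Θ, h θ ^ (a * x + b * y) / (Zx ^ a * Zy ^ b)
          ≤ a * (h θ ^ x / Zx) + b * (h θ ^ y / Zy) := by
        intro θ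
        have hg := Real.geom_mean_le_arith_mean2_weighted ha hb
          (le_of_lt (div_pos (Real.rpow_pos_of_pos (hpos θ) x) hZxpos))
          (le_of_lt (div_pos (Real.rpow_pos_of_pos (hpos θ) y) hZypos)) hab
        have heq : (h θ ^ x / Zx) ^ a * (h θ ^ y / Zy) ^ b
            = h θ ^ (a * x + b * y) / (Zx ^ a * Zy ^ b) := by
          rw [Real.div_rpow (le_of_lt (Real.rpow_pos_of_pos (hpos θ) x)) (le_of_lt hZxpos),
            Real.div_rpow (le_of_lt (Real.rpow_pos_of_pos (hpos θ) y)) (le_of_lt hZypos),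
            div_mul_div_comm, Real.rpow_add (hpos θ), mul_comm a x, mul_comm b y,
            Real.rpow_mul (le_of_lt (hpos θ)), Real.rpow_mul (le_of_lt (hpos θ))]
        rw [← heq]
        exact hg
      have hsum2 : ∑ θ, (h θ ^ (a * x + b * y) / (Zx ^ a * Zy ^ b))
          ≤ ∑ θ, (a * (h θ ^ x / Zx) + b * (h θ ^ y / Zy)) :=
        Finset.sum_le_sum (fun θ _ => hterm θ)
      have hrhs : ∑ θ, (a * (h θ ^ x / Zx) + b * (h θ ^ y / Zy)) = 1 := by
        rw [Finset.sum_add_distrib, ← Finset.mul_sum, ← Finset.mul_sum,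
          ← Finset.sum_div, ← Finset.sum_div, ← hZx, ← hZy,
          div_self (ne_of_gt hZxpos), div_self (ne_of_gt hZypos)]
        simpa using hab
      rw [← Finset.sum_div, hrhs] at hsum2
      have hZab : (0:ℝ) < Zx ^ a * Zy ^ b :=
        mul_pos (Real.rpow_pos_of_pos hZxpos a) (Real.rpow_pos_of_pos hZypos b)
      calc (∑ θ' : Θ, h θ' ^ (a * x + b * y))
          = (∑ θ' : Θ, h θ' ^ (a * x + b * y)) / (Zx ^ a * Zy ^ b) * (Zx ^ a * Zy ^ b) := by
            field_simp
        _ ≤ 1 * (Zx ^ a * Zy ^ b) := by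
            exact mul_le_mul_of_nonneg_right hsum2 (le_of_lt hZab)
        _ = Zx ^ a * Zy ^ b := one_mul _
    have hlog : Real.log (∑ θ' : Θ, h θ' ^ (a * x + b * y))
        ≤ a * Real.log (∑ θ' : Θ, h θ' ^ x) + b * Real.log (∑ θ' : Θ, h θ' ^ y) := by
      have := Real.log_le_log (hZpos (a * x + b * y)) hhold
      rwa [Real.log_mul (ne_of_gt (Real.rpow_pos_of_pos (hZpos x) a))
          (ne_of_gt (Real.rpow_pos_of_pos (hZpos y) b)),
        Real.log_rpow (hZpos x), Real.log_rpow (hZpos y)] at this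
    have haff : (1 - (a * x + b * y)) * C = a * ((1 - x) * C) + b * ((1 - y) * C) := by
      have : (1:ℝ) - (a * x + b * y) = a * (1 - x) + b * (1 - y) := by
        rw [mul_sub, mul_sub]; linarith
      rw [this]; ring
    calc (1 - (a * x + b * y)) * C + Real.log (∑ θ' : Θ, h θ' ^ (a * x + b * y))
        ≤ (1 - (a * x + b * y)) * C
          + (a * Real.log (∑ θ' : Θ, h θ' ^ x) + b * Real.log (∑ θ' : Θ, h θ' ^ y)) := by
          linarith
      _ = a * ((1 - x) * C + Real.log (∑ θ' : Θ, h θ' ^ x))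
          + b * ((1 - y) * C + Real.log (∑ θ' : Θ, h θ' ^ y)) := by
          rw [haff]; ring
  refine ⟨hconv, ?_, ?_⟩
  · -- strictly decreasing on [0,1)
    intro x hx y hy hxy
    obtain ⟨hx0, hx1⟩ := hx
    obtain ⟨hy0, hy1⟩ := hy
    have hx1' : (0:ℝ) < 1 - x := by linarith
    set t : ℝ := (1 - y) / (1 - x) with ht
    have ht0 : 0 < t := div_pos (by linarith) hx1'
    have ht1 : t < 1 := (div_lt_one hx1').mpr (by linarith)
    have hcomb : t * x + (1 - t) * 1 = y := by
      have h' : t * (1 - x) = 1 - y := by rw [ht]; exact div_mul_cancel₀ _ (ne_of_gt hx1')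
      linarith
    have := hconv.2 (Set.mem_Ici.mpr hx0) (Set.mem_Ici.mpr (zero_le_one))
      (le_of_lt ht0) (by linarith : (0:ℝ) ≤ 1 - t) (by ring)
    rw [smul_eq_mul, smul_eq_mul, hcomb, hg1] at this
    have hgx : 0 < g x := hgpos x (by linarith)
    calc g y ≤ t * g x + (1 - t) * 0 := this
      _ = t * g x := by ring
      _ < g x := by nlinarith
  · -- strictly increasing on (1,∞)
    intro x hx y hy hxy
    rw [Set.mem_Ioi] at hx hy
    have hy1' : (0:ℝ) < y - 1 := by linarith
    set t : ℝ := (y - x) / (y - 1) with ht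
    have ht0 : 0 < t := div_pos (by linarith) hy1'
    have ht1 : t < 1 := (div_lt_one hy1').mpr (by linarith)
    have hcomb : t * 1 + (1 - t) * y = x := by
      have h' : t * (y - 1) = y - x := by rw [ht]; exact div_mul_cancel₀ _ (ne_of_gt hy1')
      linarith
    have := hconv.2 (Set.mem_Ici.mpr (zero_le_one)) (Set.mem_Ici.mpr (by linarith : (0:ℝ) ≤ y))
      (le_of_lt ht0) (by linarith : (0:ℝ) ≤ 1 - t) (by ring)
    rw [smul_eq_mul, smul_eq_mul, hcomb, hg1] at this
    have hgy : 0 < g y := hgpos y (by linarith)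
    calc g x ≤ t * 0 + (1 - t) * g y := this
      _ = (1 - t) * g y := by ring
      _ < g y := by nlinarith
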